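/- Let I ⊂ ℝ be a compact interval, let h : I → ℝ be twice continuously differentiable, and suppose δ₂ > 0 satisfies |h''(x)| ≥ δ₂ for all x ∈ I. Then for every η > 0 the Lebesgue measure of the set E(η) := {x ∈ I : |h(x)| < η} satisfies |E(η)| ≤ 4·√(η/δ₂). -/

import Mathlib

open MeasureTheory Set

theorem pyartly_aux
    (a b : ℝ) (hab : a ≤ b)
    (h : ℝ → ℝ) (hh : ContDiff ℝ 2 h)
    (δ₂ : ℝ) (hδ₂ : 0 < δ₂)
    (hder : ∀ x ∈ Icc a b, δ₂ ≤ deriv (deriv h) x)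
    (η : ℝ) (hη : 0 < η) :
    volume {x ∈ Icc a b | |h x| < η} ≤ ENNReal.ofReal (4 * Real.sqrt (η / δ₂)) := by
  have h2 : ContDiff ℝ (1+1) h := by norm_num at hh ⊢; exact hh
  have hdiff : Differentiable ℝ h := (contDiff_succ_iff_deriv.mp h2).1
  have h1 : ContDiff ℝ 1 (deriv h) := (contDiff_succ_iff_deriv.mp h2).2.2
  have hdiff' : Differentiable ℝ (deriv h) := h1.differentiable one_ne_zero
  -- Key monotonicity fact
  have K : ∀ s ∈ Icc a b, ∀ t ∈ Icc a b, s ≤ t →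
      δ₂ * (t - s) ≤ deriv h t - deriv h s := by
    intro s hs t ht hst
    have hmono : MonotoneOn (fun t => deriv h t - δ₂ * t) (Icc a b) := by
      apply monotoneOn_of_deriv_nonneg (convex_Icc a b)
      · exact (hdiff'.continuous.sub (continuous_const.mul continuous_id)).continuousOn
      · exact ((hdiff'.sub ((differentiable_id.const_mul δ₂))).differentiableOn)
      · intro x hx
        rw [interior_Icc] at hx
        have hd : deriv (fun t => deriv h t - δ₂ * t) x = deriv (deriv h) x - δ₂ := by
          have e : HasDerivAt (fun t => deriv h t - δ₂ * t) (deriv (deriv h) x - δ₂ * 1) x :=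
            (hdiff' x).hasDerivAt.sub ((hasDerivAt_id x).const_mul δ₂)
          rw [e.deriv]; ring
        rw [hd]
        have := hder x (Ioo_subset_Icc_self hx)
        linarith
    have := hmono hs ht hst
    simp only at this
    linarith
  -- Taylor lower bound
  have taylor : ∀ u ∈ Icc a b, ∀ v ∈ Icc a b,
      h u + deriv h u * (v - u) + δ₂/2 * (v-u)^2 ≤ h v := by
    intro u hu v hv
    set φ : ℝ → ℝ := fun t => h t - deriv h u * t - δ₂/2 * (t - u)^2 with hφ
    have hφdiff : Differentiable ℝ φ := by
      apply Differentiable.sub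
      · exact hdiff.sub (differentiable_id.const_mul _)
      · apply Differentiable.const_mul
        apply Differentiable.pow
        exact differentiable_id.sub_const u
    have hφd : ∀ t, deriv φ t = deriv h t - deriv h u - δ₂ * (t - u) := by
      intro t
      have e1 : HasDerivAt (fun t : ℝ => h t - deriv h u * t - δ₂/2 * (t - u)^2)
          (deriv h t - deriv h u * 1 - δ₂/2 * (2 * (t - u)^1 * 1)) t := by
        exact (((hdiff t).hasDerivAt).sub ((hasDerivAt_id t).const_mul _)).sub
          ((((hasDerivAt_id t).sub_const u).pow 2).const_mul _)
      have := e1.deriv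
      rw [hφ]; rw [this]; ring
    rcases le_total u v with huv | hvu
    · have hmono : MonotoneOn φ (Icc u v) := by
        apply monotoneOn_of_deriv_nonneg (convex_Icc u v) hφdiff.continuous.continuousOn
          hφdiff.differentiableOn
        intro x hx
        rw [interior_Icc] at hx
        have hxm : x ∈ Icc a b := ⟨le_trans hu.1 hx.1.le, le_trans hx.2.le hv.2⟩
        rw [hφd]
        have := K u hu x hxm hx.1.le
        linarith
      have := hmono (left_mem_Icc.mpr huv) (right_mem_Icc.mpr huv) huv
      simp only [hφ] at this
      nlinarith [this]
    · have hmono : AntitoneOn φ (Icc v u) := by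
        apply antitoneOn_of_deriv_nonpos (convex_Icc v u) hφdiff.continuous.continuousOn
          hφdiff.differentiableOn
        intro x hx
        rw [interior_Icc] at hx
        have hxm : x ∈ Icc a b := ⟨le_trans hv.1 hx.1.le, le_trans hx.2.le hu.2⟩
        rw [hφd]
        have := K x hxm u hu hx.2.le
        linarith
      have := hmono (left_mem_Icc.mpr hvu) (right_mem_Icc.mpr hvu) hvu
      simp only [hφ] at this
      nlinarith [this]
  set E := {x ∈ Icc a b | |h x| < η} with hE
  set L := 2 * Real.sqrt (η / δ₂) with hL
  have hL0 : 0 ≤ L := by positivity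
  have hsq : Real.sqrt (η / δ₂) ^ 2 = η / δ₂ := Real.sq_sqrt (by positivity)
  have hLsq : δ₂/2 * L^2 = 2 * η := by
    rw [hL, mul_pow, hsq]
    field_simp
  -- pair bounds
  have pairR : ∀ p ∈ E, ∀ q ∈ E, p ≤ q → 0 ≤ deriv h p → q - p ≤ L := by
    intro p hp q hq hpq hdp
    have hT := taylor p hp.1 q hq.1
    have h1 : δ₂/2 * (q - p)^2 < 2 * η := by
      have := abs_lt.mp hp.2
      have := abs_lt.mp hq.2
      nlinarith
    by_contra hc
    push_neg at hc
    have : δ₂/2 * L^2 ≤ δ₂/2 * (q-p)^2 := by nlinarith [pow_le_pow_left₀ hL0 hc.le 2, hδ₂.le]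
    linarith [hLsq, this, h1]
  have pairL : ∀ p ∈ E, ∀ q ∈ E, p ≤ q → deriv h q ≤ 0 → q - p ≤ L := by
    intro p hp q hq hpq hdq
    have hT := taylor q hq.1 p hp.1
    have h1 : δ₂/2 * (p - q)^2 < 2 * η := by
      have := abs_lt.mp hp.2
      have := abs_lt.mp hq.2
      nlinarith
    by_contra hc
    push_neg at hc
    have : δ₂/2 * L^2 ≤ δ₂/2 * (p-q)^2 := by
      have h3 : L^2 ≤ (q-p)^2 := pow_le_pow_left₀ hL0 hc.le 2
      nlinarith [h3, hδ₂.le]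
    linarith [hLsq, this, h1]
  -- choose split point m
  obtain ⟨m, hm, hmL, hmR⟩ : ∃ m ∈ Icc a b,
      (∀ p ∈ E ∩ Ico a m, ∀ q ∈ E ∩ Ico a m, dist p q ≤ L) ∧
      (∀ p ∈ E ∩ Icc m b, ∀ q ∈ E ∩ Icc m b, dist p q ≤ L) := by
    set S := {x ∈ Icc a b | 0 ≤ deriv h x} with hS
    by_cases hne : S.Nonempty
    · have hSsub : S ⊆ Icc a b := fun x hx => hx.1
      have hScl : IsClosed S := by
        have : S = Icc a b ∩ {x | 0 ≤ deriv h x} := by ext x; simp [hS]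
        rw [this]
        exact isClosed_Icc.inter (isClosed_le continuous_const hdiff'.continuous)
      have hScp : IsCompact S := isCompact_Icc.of_isClosed_subset hScl hSsub
      set m := sInf S with hm'
      have hmS : m ∈ S := hScp.sInf_mem hne
      refine ⟨m, hmS.1, ?_, ?_⟩
      · intro p hp q hq
        rw [Real.dist_eq, abs_sub_le_iff]
        have hp0 : deriv h p ≤ 0 := by
          by_contra hc
          push_neg at hc
          have : p ∈ S := ⟨hp.1.1, hc.le⟩
          exact absurd (csInf_le hScp.bddBelow this) (not_le.mpr hp.2.2)
        have hq0 : deriv h q ≤ 0 := by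
          by_contra hc
          push_neg at hc
          have : q ∈ S := ⟨hq.1.1, hc.le⟩
          exact absurd (csInf_le hScp.bddBelow this) (not_le.mpr hq.2.2)
        constructor
        · rcases le_total q p with hqp | hpq
          · linarith [pairL q hq.1 p hp.1 hqp hp0]
          · linarith [hL0]
        · rcases le_total p q with hpq | hqp
          · linarith [pairL p hp.1 q hq.1 hpq hq0]
          · linarith [hL0]
      · intro p hp q hq
        rw [Real.dist_eq, abs_sub_le_iff]
        have hdm : ∀ x ∈ Icc a b, m ≤ x → 0 ≤ deriv h x := by
          intro x hx hmx
          have := K m hmS.1 x hx hmx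
          nlinarith [hmS.2, hδ₂.le]
        constructor
        · rcases le_total q p with hqp | hpq
          · linarith [pairR q hq.1 p hp.1 hqp (hdm q hq.1.1 hq.2.1)]
          · linarith [hL0]
        · rcases le_total p q with hpq | hqp
          · linarith [pairR p hp.1 q hq.1 hpq (hdm p hp.1.1 hp.2.1)]
          · linarith [hL0]
    · refine ⟨b, right_mem_Icc.mpr hab, ?_, ?_⟩
      · intro p hp q hq
        rw [Real.dist_eq, abs_sub_le_iff]
        have hneg : ∀ x ∈ Icc a b, deriv h x ≤ 0 := by
          intro x hx
          by_contra hc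
          push_neg at hc
          exact hne ⟨x, hx, hc.le⟩
        constructor
        · rcases le_total q p with hqp | hpq
          · linarith [pairL q hq.1 p hp.1 hqp (hneg p hp.1.1)]
          · linarith [hL0]
        · rcases le_total p q with hpq | hqp
          · linarith [pairL p hp.1 q hq.1 hpq (hneg q hq.1.1)]
          · linarith [hL0]
      · intro p hp q hq
        have hpb : p = b := le_antisymm hp.1.1.2 hp.2.1
        have hqb : q = b := le_antisymm hq.1.1.2 hq.2.1
        rw [hpb, hqb, dist_self]
        exact hL0
  -- now conclude with measure estimates
  have hsub : E ⊆ (E ∩ Ico a m) ∪ (E ∩ Icc m b) := by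
    intro x hx
    rcases lt_or_ge x m with hxm | hmx
    · exact Or.inl ⟨hx, hx.1.1, hxm⟩
    · exact Or.inr ⟨hx, hmx, hx.1.2⟩
  have d1 : volume (E ∩ Ico a m) ≤ ENNReal.ofReal L := by
    refine le_trans (Real.volume_le_diam _) (EMetric.diam_le ?_)
    intro x hx y hy
    rw [edist_dist]
    exact ENNReal.ofReal_le_ofReal (hmL x hx y hy)
  have d2 : volume (E ∩ Icc m b) ≤ ENNReal.ofReal L := by
    refine le_trans (Real.volume_le_diam _) (EMetric.diam_le ?_)
    intro x hx y hy
    rw [edist_dist]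
    exact ENNReal.ofReal_le_ofReal (hmR x hx y hy)
  calc volume E ≤ volume ((E ∩ Ico a m) ∪ (E ∩ Icc m b)) := measure_mono hsub
    _ ≤ volume (E ∩ Ico a m) + volume (E ∩ Icc m b) := measure_union_le _ _
    _ ≤ ENNReal.ofReal L + ENNReal.ofReal L := add_le_add d1 d2
    _ = ENNReal.ofReal (4 * Real.sqrt (η / δ₂)) := by
        rw [← ENNReal.ofReal_add hL0 hL0, hL]
        ring_nf

/-- **Pyartly's lemma, second-derivative case.** If `|h''(x)| ≥ δ₂` on the
compact interval `[a,b]`, then `|{x ∈ [a,b] : |h(x)| < η}| ≤ 4√(η/δ₂)`. -/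
theorem pyartly_second_derivative
    (a b : ℝ) (hab : a ≤ b)
    (h : ℝ → ℝ) (hh : ContDiff ℝ 2 h)
    (δ₂ : ℝ) (hδ₂ : 0 < δ₂)
    (hder : ∀ x ∈ Icc a b, δ₂ ≤ |deriv (deriv h) x|)
    (η : ℝ) (hη : 0 < η) :
    volume {x ∈ Icc a b | |h x| < η} ≤ ENNReal.ofReal (4 * Real.sqrt (η / δ₂)) := by
  have h2 : ContDiff ℝ (1+1) h := by norm_num at hh ⊢; exact hh
  have h1 : ContDiff ℝ 1 (deriv h) := (contDiff_succ_iff_deriv.mp h2).2.2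
  have h1' : ContDiff ℝ (0+1) (deriv h) := by norm_num at h1 ⊢; exact h1
  have cont2 : Continuous (deriv (deriv h)) :=
    ((contDiff_succ_iff_deriv.mp h1').2.2).continuous
  have hsign : (∀ x ∈ Icc a b, δ₂ ≤ deriv (deriv h) x) ∨
      (∀ x ∈ Icc a b, deriv (deriv h) x ≤ -δ₂) := by
    by_contra hc
    push_neg at hc
    obtain ⟨⟨x₀, hx₀, hx₀'⟩, ⟨x₁, hx₁, hx₁'⟩⟩ := hc
    have f0 : deriv (deriv h) x₀ ≤ -δ₂ := by
      rcases le_abs.mp (hder x₀ hx₀) with h' | h'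
      · linarith
      · linarith
    have f1 : δ₂ ≤ deriv (deriv h) x₁ := by
      rcases le_abs.mp (hder x₁ hx₁) with h' | h'
      · linarith
      · linarith
    have hx : (0:ℝ) ∈ uIcc (deriv (deriv h) x₀) (deriv (deriv h) x₁) := by
      rw [mem_uIcc]
      left
      exact ⟨by linarith, by linarith⟩
    obtain ⟨z, hz, hz0⟩ := intermediate_value_uIcc cont2.continuousOn hx
    have hzab : z ∈ Icc a b := by
      have : uIcc x₀ x₁ ⊆ Icc a b := uIcc_subset_Icc hx₀ hx₁
      exact this hz
    have := hder z hzab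
    rw [hz0] at this
    simp at this
    linarith
  rcases hsign with hs | hs
  · exact pyartly_aux a b hab h hh δ₂ hδ₂ hs η hη
  · have hder' : ∀ x ∈ Icc a b, δ₂ ≤ deriv (deriv (fun x => -h x)) x := by
      intro x hx
      have e : deriv (fun x => -h x) = fun x => -deriv h x := funext fun x => deriv.neg
      rw [e]
      have e2 : deriv (fun x => -deriv h x) x = -deriv (deriv h) x := deriv.neg
      rw [e2]
      linarith [hs x hx]
    have := pyartly_aux a b hab (fun x => -h x) hh.neg δ₂ hδ₂ hder' η hη
    simpa only [abs_neg] using this
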